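/- For b > 0 let C_b : ℝ² → ℝ be the LMSR cost function C_b(q) = b·log(e^{q₁/b} + e^{q₂/b}). Then for all b₁, b₂ > 0 the infimal convolution of C_{b₁} and C_{b₂} is C_{b₁+b₂}: for every q ∈ ℝ², inf{C_{b₁}(q¹) + C_{b₂}(q²) : q¹ + q² = q} = (b₁+b₂)·log(e^{q₁/(b₁+b₂)} + e^{q₂/(b₁+b₂)}). -/

import Mathlib

noncomputable section

/-- The LMSR cost function with liquidity parameter `b` on two securities. -/
def lmsr (b : ℝ) (q : ℝ × ℝ) : ℝ := b * Real.log (Real.exp (q.1 / b) + Real.exp (q.2 / b))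

lemma holder2 {θ u v s t : ℝ} (hθ : 0 < θ) (hθ' : θ < 1)
    (hu : 0 < u) (hv : 0 < v) (hs : 0 < s) (ht : 0 < t) :
    u ^ θ * v ^ (1 - θ) + s ^ θ * t ^ (1 - θ) ≤ (u + s) ^ θ * (v + t) ^ (1 - θ) := by
  have hus : 0 < u + s := by linarith
  have hvt : 0 < v + t := by linarith
  have h1 := Real.geom_mean_le_arith_mean2_weighted hθ.le (by linarith : (0:ℝ) ≤ 1 - θ)
    (by positivity : (0:ℝ) ≤ u/(u+s)) (by positivity : (0:ℝ) ≤ v/(v+t)) (by ring)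
  have h2 := Real.geom_mean_le_arith_mean2_weighted hθ.le (by linarith : (0:ℝ) ≤ 1 - θ)
    (by positivity : (0:ℝ) ≤ s/(u+s)) (by positivity : (0:ℝ) ≤ t/(v+t)) (by ring)
  have hsum : (u/(u+s))^θ * (v/(v+t))^(1-θ) + (s/(u+s))^θ * (t/(v+t))^(1-θ) ≤ 1 := by
    calc (u/(u+s))^θ * (v/(v+t))^(1-θ) + (s/(u+s))^θ * (t/(v+t))^(1-θ)
        ≤ (θ*(u/(u+s)) + (1-θ)*(v/(v+t))) + (θ*(s/(u+s)) + (1-θ)*(t/(v+t))) :=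
          add_le_add h1 h2
      _ = 1 := by field_simp; ring
  rw [Real.div_rpow hu.le hus.le, Real.div_rpow hv.le hvt.le,
      Real.div_rpow hs.le hus.le, Real.div_rpow ht.le hvt.le,
      div_mul_div_comm, div_mul_div_comm, ← add_div,
      div_le_one (by positivity)] at hsum
  exact hsum

lemma lmsr_lower (b₁ b₂ : ℝ) (hb₁ : 0 < b₁) (hb₂ : 0 < b₂) (p₁ p₂ : ℝ × ℝ) :
    lmsr (b₁ + b₂) (p₁ + p₂) ≤ lmsr b₁ p₁ + lmsr b₂ p₂ := by
  set b := b₁ + b₂ with hbdef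
  have hb : 0 < b := by positivity
  set θ := b₁ / b with hθdef
  have hθ : 0 < θ := by positivity
  have hθ' : θ < 1 := by
    rw [hθdef, div_lt_one hb]; simp [hbdef]; linarith
  have h1θ : 1 - θ = b₂ / b := by rw [hθdef, hbdef]; field_simp; ring
  set u := Real.exp (p₁.1 / b₁) with hudef
  set s := Real.exp (p₁.2 / b₁) with hsdef
  set v := Real.exp (p₂.1 / b₂) with hvdef
  set t := Real.exp (p₂.2 / b₂) with htdef
  have hu : 0 < u := Real.exp_pos _
  have hv : 0 < v := Real.exp_pos _
  have hs : 0 < s := Real.exp_pos _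
  have ht : 0 < t := Real.exp_pos _
  have key := holder2 hθ hθ' hu hv hs ht
  have e1 : Real.exp ((p₁.1 + p₂.1) / b) = u ^ θ * v ^ (1 - θ) := by
    rw [← Real.exp_log (Real.rpow_pos_of_pos hu θ),
        ← Real.exp_log (Real.rpow_pos_of_pos hv (1-θ)),
        Real.log_rpow hu, Real.log_rpow hv, ← Real.exp_add]
    congr 1
    rw [hudef, hvdef]
    simp only [Real.log_exp]
    rw [hθdef, h1θ]; field_simp
  have e2 : Real.exp ((p₁.2 + p₂.2) / b) = s ^ θ * t ^ (1 - θ) := by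
    rw [← Real.exp_log (Real.rpow_pos_of_pos hs θ),
        ← Real.exp_log (Real.rpow_pos_of_pos ht (1-θ)),
        Real.log_rpow hs, Real.log_rpow ht, ← Real.exp_add]
    congr 1
    rw [hsdef, htdef]
    simp only [Real.log_exp]
    rw [hθdef, h1θ]; field_simp
  have hA₁ : 0 < u + s := by linarith
  have hA₂ : 0 < v + t := by linarith
  have hlog : Real.log (Real.exp ((p₁.1 + p₂.1) / b) + Real.exp ((p₁.2 + p₂.2) / b))
      ≤ θ * Real.log (u + s) + (1 - θ) * Real.log (v + t) := by
    rw [e1, e2, ← Real.log_rpow hA₁, ← Real.log_rpow hA₂,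
        ← Real.log_mul (by positivity) (by positivity)]
    exact Real.log_le_log (by positivity) key
  have : lmsr b (p₁ + p₂) = b * Real.log (Real.exp ((p₁.1 + p₂.1) / b) + Real.exp ((p₁.2 + p₂.2) / b)) := rfl
  rw [this]
  have : lmsr b₁ p₁ + lmsr b₂ p₂ = b * (θ * Real.log (u + s) + (1 - θ) * Real.log (v + t)) := by
    unfold lmsr
    rw [hθdef, h1θ]; field_simp
    rw [hudef, hsdef, hvdef, htdef]
  rw [this]
  exact mul_le_mul_of_nonneg_left hlog hb.le

/-- The infimal convolution of the LMSR cost functions with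
parameters `b₁, b₂ > 0` is the LMSR cost function with parameter `b₁ + b₂`. -/
theorem statement14 (b₁ b₂ : ℝ) (hb₁ : 0 < b₁) (hb₂ : 0 < b₂) (q : ℝ × ℝ) :
    sInf {s : ℝ | ∃ q₁ q₂ : ℝ × ℝ, q₁ + q₂ = q ∧ s = lmsr b₁ q₁ + lmsr b₂ q₂} =
      (b₁ + b₂) * Real.log (Real.exp (q.1 / (b₁ + b₂)) + Real.exp (q.2 / (b₁ + b₂))) := by
  have hb : 0 < b₁ + b₂ := by positivity
  have htarget : (b₁ + b₂) * Real.log (Real.exp (q.1 / (b₁ + b₂)) + Real.exp (q.2 / (b₁ + b₂)))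
      = lmsr (b₁ + b₂) q := rfl
  have hlb : ∀ x ∈ {s : ℝ | ∃ q₁ q₂ : ℝ × ℝ, q₁ + q₂ = q ∧ s = lmsr b₁ q₁ + lmsr b₂ q₂},
      lmsr (b₁ + b₂) q ≤ x := by
    rintro x ⟨p₁, p₂, hpq, rfl⟩
    rw [← hpq]
    exact lmsr_lower b₁ b₂ hb₁ hb₂ p₁ p₂
  -- the attaining pair
  have hmem : lmsr (b₁ + b₂) q ∈
      {s : ℝ | ∃ q₁ q₂ : ℝ × ℝ, q₁ + q₂ = q ∧ s = lmsr b₁ q₁ + lmsr b₂ q₂} := by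
    refine ⟨(b₁ / (b₁ + b₂) * q.1, b₁ / (b₁ + b₂) * q.2),
            (b₂ / (b₁ + b₂) * q.1, b₂ / (b₁ + b₂) * q.2), ?_, ?_⟩
    · apply Prod.ext <;> simp <;> field_simp <;> ring
    · unfold lmsr
      simp only
      have e1 : b₁ / (b₁ + b₂) * q.1 / b₁ = q.1 / (b₁ + b₂) := by field_simp
      have e2 : b₁ / (b₁ + b₂) * q.2 / b₁ = q.2 / (b₁ + b₂) := by field_simp
      have e3 : b₂ / (b₁ + b₂) * q.1 / b₂ = q.1 / (b₁ + b₂) := by field_simp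
      have e4 : b₂ / (b₁ + b₂) * q.2 / b₂ = q.2 / (b₁ + b₂) := by field_simp
      rw [e1, e2, e3, e4]; ring
  rw [htarget]
  exact le_antisymm (csInf_le ⟨lmsr (b₁ + b₂) q, hlb⟩ hmem) (le_csInf ⟨_, hmem⟩ hlb)
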